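/- The curvature R of G(d) is given explicitly as follows, for x,y,z,x1,x2 ∈ d and h,h1,h2,h3 ∈ h, with β* := ℓ^{-1}∘β: (i) R(ℓ(h1),ℓ(h2))ℓ(h3) = 0; (ii) R(ℓ(h1),ℓ(h2))x = ¼π([h1,h2]_h)x; (iii) R(x,ℓ(h1))ℓ(h2) = −¼π(h1)π(h2)x; (iv) R(x1,ℓ(h))x2 = ¼[π(h)x1, x2]_d − ¼β(x1, π(h)x2); (v) R(x1,x2)ℓ(h) = −¼β(x1, π(h)x2) − ¼β(π(h)x1, x2) + ¼π(h)[x1,x2]_d; (vi) R(x,y)z = ½π(β*(x,y))z − ¼π(β*(y,z))x − ¼π(β*(z,x))y + ¼β(z,[x,y]_d) − ¼[[x,y]_d, z]_d. -/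
import Mathlib


open Module

variable {H D : Type} [LieRing H] [LieAlgebra ℝ H] [FiniteDimensional ℝ H]
  [LieRing D] [LieAlgebra ℝ D] [FiniteDimensional ℝ D]

/-- `beta BD π x y` is the element `β(x,y)` of `h*` given by `a ↦ ⟨π(a)x, y⟩_d`. -/
def beta (BD : LinearMap.BilinForm ℝ D) (π : H →ₗ[ℝ] D →ₗ[ℝ] D) (x y : D) : Dual ℝ H :=
  (BD.flip y).comp (π.flip x)

/-- The bracket on `G(d) = d ⊕ h*`: `[x₁+α₁, x₂+α₂] = [x₁,x₂]_d + β(x₁,x₂)`. -/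
def gbr (BD : LinearMap.BilinForm ℝ D) (π : H →ₗ[ℝ] D →ₗ[ℝ] D)
    (u v : D × Dual ℝ H) : D × Dual ℝ H :=
  (⁅u.1, v.1⁆, beta BD π u.1 v.1)

/-- The inverse of the isomorphism `ℓ : h → h*`, `ℓ(h) = ⟨h,·⟩_h`. -/
noncomputable def ellInv (BH : LinearMap.BilinForm ℝ H) (hBH : BH.Nondegenerate)
    (α : Dual ℝ H) : H :=
  (LinearMap.BilinForm.toDual BH hBH).symm α

/-- The Levi-Civita connection
`∇_{x₁+ℓ(h₁)}(x₂+ℓ(h₂)) = ½([x₁,x₂]_d + β(x₁,x₂) − π(h₁)x₂ − π(h₂)x₁)`. -/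
noncomputable def nabG (BH : LinearMap.BilinForm ℝ H) (hBH : BH.Nondegenerate)
    (BD : LinearMap.BilinForm ℝ D) (π : H →ₗ[ℝ] D →ₗ[ℝ] D)
    (u v : D × Dual ℝ H) : D × Dual ℝ H :=
  ((2⁻¹ : ℝ) • (⁅u.1, v.1⁆ - π (ellInv BH hBH u.2) v.1 - π (ellInv BH hBH v.2) u.1),
   (2⁻¹ : ℝ) • beta BD π u.1 v.1)

/-- The curvature `R(w₁,w₂)w₃ = ∇_{w₁}∇_{w₂}w₃ − ∇_{w₂}∇_{w₁}w₃ − ∇_{[w₁,w₂]}w₃`. -/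
noncomputable def Rfun (BH : LinearMap.BilinForm ℝ H) (hBH : BH.Nondegenerate)
    (BD : LinearMap.BilinForm ℝ D) (π : H →ₗ[ℝ] D →ₗ[ℝ] D)
    (w₁ w₂ w₃ : D × Dual ℝ H) : D × Dual ℝ H :=
  nabG BH hBH BD π w₁ (nabG BH hBH BD π w₂ w₃)
    - nabG BH hBH BD π w₂ (nabG BH hBH BD π w₁ w₃)
    - nabG BH hBH BD π (gbr BD π w₁ w₂) w₃

/-- `β* = ℓ⁻¹ ∘ β : d × d → h`. -/
noncomputable def betaStar (BH : LinearMap.BilinForm ℝ H) (hBH : BH.Nondegenerate)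
    (BD : LinearMap.BilinForm ℝ D) (π : H →ₗ[ℝ] D →ₗ[ℝ] D) (x y : D) : H :=
  ellInv BH hBH (beta BD π x y)


section Aux
variable (BH : LinearMap.BilinForm ℝ H) (hBH : BH.Nondegenerate)
  (BD : LinearMap.BilinForm ℝ D) (π : H →ₗ[ℝ] D →ₗ[ℝ] D)

set_option linter.unusedSectionVars false

lemma ellInv_ell (h : H) : ellInv BH hBH (BH h) = h := by
  have : BH h = LinearMap.BilinForm.toDual BH hBH h := rfl
  rw [ellInv, this, LinearEquiv.symm_apply_apply]

@[simp] lemma ellInv_zero : ellInv BH hBH 0 = 0 := map_zero _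
@[simp] lemma ellInv_smul (r : ℝ) (α : Dual ℝ H) :
    ellInv BH hBH (r • α) = r • ellInv BH hBH α := map_smul _ _ _

@[simp] lemma beta_apply (x y : D) (a : H) : beta BD π x y a = BD (π a x) y := rfl
@[simp] lemma beta_zero_left (y : D) : beta BD π 0 y = 0 := by ext a; simp
@[simp] lemma beta_zero_right (x : D) : beta BD π x 0 = 0 := by ext a; simp
@[simp] lemma beta_smul_left (r : ℝ) (x y : D) :
    beta BD π (r • x) y = r • beta BD π x y := by ext a; simp
@[simp] lemma beta_smul_right (r : ℝ) (x y : D) :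
    beta BD π x (r • y) = r • beta BD π x y := by ext a; simp

lemma beta_skew (hBDsymm : ∀ x y : D, BD x y = BD y x)
    (hπskew : ∀ a : H, ∀ x y : D, BD (π a x) y = - BD x (π a y)) (x y : D) :
    beta BD π x y = - beta BD π y x := by
  ext a
  simp only [beta_apply, LinearMap.neg_apply]
  rw [hπskew, hBDsymm]

end Aux

/-- The explicit formulas for the curvature tensor of `G(d)`. -/
theorem curvature_formulas
    (BH : LinearMap.BilinForm ℝ H)
    (hBHsymm : ∀ a b : H, BH a b = BH b a)
    (hBHnd : BH.Nondegenerate)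
    (hBHinv : ∀ a b c : H, BH ⁅a, b⁆ c = - BH b ⁅a, c⁆)
    (BD : LinearMap.BilinForm ℝ D)
    (hBDsymm : ∀ x y : D, BD x y = BD y x)
    (hBDnd : BD.Nondegenerate)
    (hBDinv : ∀ x y z : D, BD ⁅x, y⁆ z = - BD y ⁅x, z⁆)
    (π : H →ₗ[ℝ] D →ₗ[ℝ] D)
    (hπder : ∀ a : H, ∀ x y : D, π a ⁅x, y⁆ = ⁅π a x, y⁆ + ⁅x, π a y⁆)
    (hπhom : ∀ a b : H, π ⁅a, b⁆ = π a ∘ₗ π b - π b ∘ₗ π a)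
    (hπskew : ∀ a : H, ∀ x y : D, BD (π a x) y = - BD x (π a y)) :
    -- (i) R(ℓh₁, ℓh₂)ℓh₃ = 0
    (∀ h₁ h₂ h₃ : H, Rfun BH hBHnd BD π (0, BH h₁) (0, BH h₂) (0, BH h₃) = 0) ∧
    -- (ii) R(ℓh₁, ℓh₂)x = ¼ π([h₁,h₂]) x
    (∀ (h₁ h₂ : H) (x : D),
      Rfun BH hBHnd BD π (0, BH h₁) (0, BH h₂) (x, 0)
        = ((4⁻¹ : ℝ) • π ⁅h₁, h₂⁆ x, 0)) ∧
    -- (iii) R(x, ℓh₁)ℓh₂ = −¼ π(h₁)π(h₂)x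
    (∀ (h₁ h₂ : H) (x : D),
      Rfun BH hBHnd BD π (x, 0) (0, BH h₁) (0, BH h₂)
        = (-(4⁻¹ : ℝ) • π h₁ (π h₂ x), 0)) ∧
    -- (iv) R(x₁, ℓh)x₂ = ¼[π(h)x₁, x₂]_d − ¼β(x₁, π(h)x₂)
    (∀ (h : H) (x₁ x₂ : D),
      Rfun BH hBHnd BD π (x₁, 0) (0, BH h) (x₂, 0)
        = ((4⁻¹ : ℝ) • ⁅π h x₁, x₂⁆, -(4⁻¹ : ℝ) • beta BD π x₁ (π h x₂))) ∧
    -- (v) R(x₁,x₂)ℓh = −¼β(x₁, π(h)x₂) − ¼β(π(h)x₁, x₂) + ¼π(h)[x₁,x₂]_d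
    (∀ (h : H) (x₁ x₂ : D),
      Rfun BH hBHnd BD π (x₁, 0) (x₂, 0) (0, BH h)
        = ((4⁻¹ : ℝ) • π h ⁅x₁, x₂⁆,
           -(4⁻¹ : ℝ) • beta BD π x₁ (π h x₂) - (4⁻¹ : ℝ) • beta BD π (π h x₁) x₂)) ∧
    -- (vi) R(x,y)z = ½π(β*(x,y))z − ¼π(β*(y,z))x − ¼π(β*(z,x))y + ¼β(z,[x,y]_d)
    --      − ¼[[x,y]_d, z]_d
    (∀ x y z : D,
      Rfun BH hBHnd BD π (x, 0) (y, 0) (z, 0)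
        = ((2⁻¹ : ℝ) • π (betaStar BH hBHnd BD π x y) z
            - (4⁻¹ : ℝ) • π (betaStar BH hBHnd BD π y z) x
            - (4⁻¹ : ℝ) • π (betaStar BH hBHnd BD π z x) y
            - (4⁻¹ : ℝ) • ⁅⁅x, y⁆, z⁆,
           (4⁻¹ : ℝ) • beta BD π z ⁅x, y⁆)) := by
  refine ⟨?_, ?_, ?_, ?_, ?_, ?_⟩
  · intro h₁ h₂ h₃
    simp [Rfun, nabG, gbr, ellInv_ell, Prod.ext_iff]
  · intro h₁ h₂ x
    simp [Rfun, nabG, gbr, ellInv_ell, Prod.ext_iff]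
    rw [hπhom h₁ h₂]
    simp only [LinearMap.sub_apply, LinearMap.comp_apply]
    module
  · intro h₁ h₂ x
    simp [Rfun, nabG, gbr, ellInv_ell, Prod.ext_iff]
    module
  · intro h x₁ x₂
    simp [Rfun, nabG, gbr, ellInv_ell, Prod.ext_iff]
    constructor
    · rw [hπder h x₁ x₂]; module
    · ext a; simp; ring
  · intro h x₁ x₂
    simp [Rfun, nabG, gbr, ellInv_ell, Prod.ext_iff]
    constructor
    · rw [hπder h x₁ x₂, show ⁅x₂, π h x₁⁆ = -⁅π h x₁, x₂⁆ from (lie_skew _ _).symm]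
      module
    · ext a
      simp
      have e1 := hπskew a (π h x₁) x₂
      have e2 := hBDsymm (π h x₁) (π a x₂)
      linarith
  · intro x y z
    have hbs : ellInv BH hBHnd (beta BD π x z) = - ellInv BH hBHnd (beta BD π z x) := by
      rw [beta_skew BD π hBDsymm hπskew x z]
      exact map_neg ((LinearMap.BilinForm.toDual BH hBHnd).symm) _
    simp [Rfun, nabG, gbr, ellInv_ell, betaStar, Prod.ext_iff]
    constructor
    · rw [hbs, map_neg, LinearMap.neg_apply]
      module
    · ext a
      simp
      have e1 : BD (π a x) ⁅y, z⁆ = BD ⁅π a x, y⁆ z := by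
        rw [show ⁅π a x, y⁆ = -⁅y, π a x⁆ from (lie_skew _ _).symm, map_neg,
          LinearMap.neg_apply, hBDinv y (π a x) z]
        ring_nf
      have e2 : BD (π a y) ⁅x, z⁆ = - BD ⁅x, π a y⁆ z := by
        rw [hBDinv x (π a y) z, neg_neg]
      have e3 : BD (π a z) ⁅x, y⁆ = - BD ⁅π a x, y⁆ z - BD ⁅x, π a y⁆ z := by
        rw [hπskew a z ⁅x, y⁆, hπder a x y, map_add, hBDsymm z, hBDsymm z]
        ring_nf
      have e4 : BD (π a ⁅x, y⁆) z = BD ⁅π a x, y⁆ z + BD ⁅x, π a y⁆ z := by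
        rw [hπder a x y, map_add, LinearMap.add_apply]
      linarith
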